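/- arXiv:1406.7131 — 3 statements merged into one kernel-verified Lean document; each statement's English description precedes it below -/
import Mathlib

section
/- Let $\mathcal{M}$ be a finite set of $d \times d$ real matrices with joint spectral radius $\rho(\mathcal{M}) > 1$, and let $y \in \mathbb{R}^d$ be a nonzero vector not contained in any proper linear subspace of $\mathbb{R}^d$ invariant under all matrices in $\mathcal{M}$. Then for every $L \in \mathbb{N}$ there exist $n \geq L$ and matrices $M_1, \dots, M_n \in \mathcal{M}$ such that $\|M_1 \cdots M_n y\| > \|y\|$ and $\|M_1 \cdots M_n y\| > \|M_{n-i} \cdots M_n y\|$ for all $i = 0, \dots, n-2$. -/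
noncomputable def mnorm {ι : Type*} [Fintype ι] (A : Matrix ι ι ℝ) : ℝ :=
  ⨆ i, ⨆ j, |A i j|

def prodOf {ι : Type*} [Fintype ι] [DecidableEq ι] (S : Set (Matrix ι ι ℝ)) (n : ℕ) :
    Set (Matrix ι ι ℝ) :=
  {P | ∃ l : List (Matrix ι ι ℝ), l.length = n ∧ (∀ A ∈ l, A ∈ S) ∧ l.prod = P}

noncomputable def jsr {ι : Type*} [Fintype ι] [DecidableEq ι]
    (S : Set (Matrix ι ι ℝ)) : ℝ :=
  Filter.limsup
    (fun n : ℕ => sSup ((fun P => mnorm P ^ (1 / (n:ℝ))) '' prodOf S n))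
    Filter.atTop

open Filter

lemma mnorm_nonneg {ι : Type*} [Fintype ι] (A : Matrix ι ι ℝ) : 0 ≤ mnorm A :=
  Real.iSup_nonneg fun _ => Real.iSup_nonneg fun _ => abs_nonneg _

/-- Auxiliary continuous linear map of a matrix. -/
noncomputable def clmOf {d : ℕ} (A : Matrix (Fin d) (Fin d) ℝ) :
    (Fin d → ℝ) →L[ℝ] (Fin d → ℝ) :=
  LinearMap.toContinuousLinearMap A.mulVecLin

lemma clmOf_apply {d : ℕ} (A : Matrix (Fin d) (Fin d) ℝ) (z : Fin d → ℝ) :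
    clmOf A z = A.mulVec z := rfl

/-- Key lemma: orbit norms are unbounded. -/
lemma jsr_unbounded (d : ℕ) (hd : 0 < d) (S : Set (Matrix (Fin d) (Fin d) ℝ))
    (hρ : 1 < jsr S) (y : Fin d → ℝ)
    (hinv : ∀ V : Submodule ℝ (Fin d → ℝ), V ≠ ⊤ →
      (∀ A ∈ S, ∀ x ∈ V, A.mulVec x ∈ V) → y ∉ V) :
    ∀ C : ℝ, ∃ l : List (Matrix (Fin d) (Fin d) ℝ),
      (∀ A ∈ l, A ∈ S) ∧ C < ‖l.prod.mulVec y‖ := by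
  by_contra hcon
  push_neg at hcon
  obtain ⟨C, hC⟩ := hcon
  -- The orbit set
  set O : Set (Fin d → ℝ) :=
    {x | ∃ l : List (Matrix (Fin d) (Fin d) ℝ), (∀ A ∈ l, A ∈ S) ∧ l.prod.mulVec y = x} with hO
  have hyO : y ∈ O := ⟨[], by simp, by simp [Matrix.one_mulVec]⟩
  have hOC : ∀ x ∈ O, ∀ l : List (Matrix (Fin d) (Fin d) ℝ), (∀ A ∈ l, A ∈ S) →
      ‖l.prod.mulVec x‖ ≤ C := by
    rintro x ⟨w, hw, rfl⟩ l hl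
    have : l.prod.mulVec (w.prod.mulVec y) = (l ++ w).prod.mulVec y := by
      rw [List.prod_append, ← Matrix.mulVec_mulVec]
    rw [this]
    exact hC _ (by intro A hA; rcases List.mem_append.1 hA with h | h; exacts [hl A h, hw A h])
  -- The span of the orbit is invariant, hence everything
  have hspan : Submodule.span ℝ O = ⊤ := by
    by_contra hne
    refine hinv _ hne ?_ (Submodule.subset_span hyO)
    intro A hA x hx
    have himg : A.mulVecLin '' O ⊆ O := by
      rintro _ ⟨x, ⟨l, hl, rfl⟩, rfl⟩
      refine ⟨A :: l, ?_, ?_⟩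
      · intro B hB; rcases List.mem_cons.1 hB with h | h; exacts [h ▸ hA, hl B h]
      · simp [List.prod_cons, ← Matrix.mulVec_mulVec, Matrix.mulVecLin_apply]
    have hx' : A.mulVecLin x ∈ Submodule.span ℝ (A.mulVecLin '' O) := by
      rw [← Submodule.map_span]; exact Submodule.mem_map_of_mem hx
    exact Submodule.span_le.2 (himg.trans Submodule.subset_span) hx'
  -- each basis vector is a combination of orbit elements
  have hmem : ∀ j : Fin d, (Pi.single j 1 : Fin d → ℝ) ∈ Submodule.span ℝ O := by
    intro j; rw [hspan]; trivial
  choose m c g hg using fun j => Submodule.mem_span_set'.1 (hmem j)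
  -- uniform bound on entries of products
  set K : Fin d → ℝ := fun j => ∑ i : Fin (m j), |c j i| * C with hK
  set D : ℝ := ∑ j : Fin d, K j with hD
  have hCnn : 0 ≤ C := le_trans (norm_nonneg y) (by
    simpa [Matrix.one_mulVec] using hC [] (by simp))
  have hKnn : ∀ j, 0 ≤ K j := fun j =>
    Finset.sum_nonneg fun i _ => mul_nonneg (abs_nonneg _) hCnn
  have hKD : ∀ j, K j ≤ D := fun j =>
    Finset.single_le_sum (fun i _ => hKnn i) (Finset.mem_univ j)
  have hbound : ∀ l : List (Matrix (Fin d) (Fin d) ℝ), (∀ A ∈ l, A ∈ S) →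
      mnorm l.prod ≤ D := by
    intro l hl
    have hentry : ∀ i j, |l.prod i j| ≤ D := by
      intro i j
      have h1 : l.prod.mulVec (Pi.single j 1) =
          ∑ k : Fin (m j), c j k • l.prod.mulVec (g j k : Fin d → ℝ) := by
        rw [← hg j, ← Matrix.mulVecLin_apply, map_sum]
        simp [Matrix.mulVecLin_apply, Matrix.mulVec_smul]
      have h2 : ‖l.prod.mulVec (Pi.single j 1)‖ ≤ K j := by
        rw [h1]
        refine le_trans (norm_sum_le _ _) ?_
        refine Finset.sum_le_sum fun k _ => ?_
        rw [norm_smul, Real.norm_eq_abs]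
        exact mul_le_mul_of_nonneg_left (hOC _ (g j k).2 l hl) (abs_nonneg _)
      have h3 : |l.prod i j| ≤ ‖l.prod.mulVec (Pi.single j 1)‖ := by
        have := norm_le_pi_norm (l.prod.mulVec (Pi.single j 1)) i
        simpa [Matrix.mulVec_single, Real.norm_eq_abs] using this
      exact h3.trans (h2.trans (hKD j))
    have : Nonempty (Fin d) := ⟨⟨0, hd⟩⟩
    exact ciSup_le fun i => ciSup_le fun j => hentry i j
  -- hence jsr ≤ 1
  set B : ℝ := max D 1 with hB
  have hB1 : (1:ℝ) ≤ B := le_max_right _ _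
  have hBpos : (0:ℝ) < B := lt_of_lt_of_le one_pos hB1
  set f : ℕ → ℝ := fun n => sSup ((fun P => mnorm P ^ (1 / (n:ℝ))) '' prodOf S n) with hf
  have hfle : ∀ n : ℕ, f n ≤ B ^ (1 / (n:ℝ)) := by
    intro n
    refine Real.sSup_le ?_ (Real.rpow_nonneg hBpos.le _)
    rintro x ⟨P, ⟨l, hlen, hl, rfl⟩, rfl⟩
    exact Real.rpow_le_rpow (mnorm_nonneg _) ((hbound l hl).trans (le_max_left _ _))
      (by positivity)
  have hf0 : ∀ n : ℕ, 0 ≤ f n := by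
    intro n
    exact Real.sSup_nonneg fun x => by
      rintro ⟨P, _, rfl⟩; exact Real.rpow_nonneg (mnorm_nonneg _) _
  have hg' : Tendsto (fun n : ℕ => B ^ (1/(n:ℝ))) atTop (nhds 1) := by
    have h1 : Tendsto (fun n : ℕ => Real.log B * (1/(n:ℝ))) atTop (nhds 0) := by
      simpa using tendsto_one_div_atTop_nhds_zero_nat.const_mul (Real.log B)
    have h3 := (Real.continuous_exp.tendsto 0).comp h1
    simp only [Function.comp_def, Real.exp_zero] at h3
    exact h3.congr fun n => (Real.rpow_def_of_pos hBpos _).symm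
  set a : ℝ := (1 + jsr S) / 2 with ha
  have ha1 : 1 < a := by rw [ha]; linarith
  have ha2 : a < jsr S := by rw [ha]; linarith
  have hev : ∀ᶠ n in atTop, f n ≤ a :=
    (hg'.eventually_lt_const ha1).mono fun n hn => (hfle n).trans hn.le
  have : jsr S ≤ a :=
    limsup_le_of_le (isCoboundedUnder_le_of_le atTop (x := 0) hf0) hev
  exact absurd this (not_le.2 ha2)

theorem stmt3 (d : ℕ) (S : Set (Matrix (Fin d) (Fin d) ℝ)) (hfin : S.Finite)
    (hρ : 1 < jsr S) (y : Fin d → ℝ) (hy : y ≠ 0)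
    (hinv : ∀ V : Submodule ℝ (Fin d → ℝ), V ≠ ⊤ →
      (∀ A ∈ S, ∀ x ∈ V, A.mulVec x ∈ V) → y ∉ V) :
    ∀ L : ℕ, ∃ n, L ≤ n ∧ ∃ l : List (Matrix (Fin d) (Fin d) ℝ),
      l.length = n ∧ (∀ A ∈ l, A ∈ S) ∧
      ‖y‖ < ‖l.prod.mulVec y‖ ∧
      ∀ i : ℕ, i ≤ n - 2 →
        ‖(l.drop (n - (i+1))).prod.mulVec y‖ < ‖l.prod.mulVec y‖ := by
  intro L
  rcases Nat.eq_zero_or_pos d with hd | hd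
  · subst hd; exact absurd (funext fun i => i.elim0) hy
  -- a uniform bound on the operator norms of elements of S
  obtain ⟨c, hc⟩ : ∃ c : ℝ, ∀ A ∈ S, ‖clmOf A‖ ≤ c := by
    obtain ⟨c, hc⟩ := (hfin.image fun A => ‖clmOf A‖).bddAbove
    exact ⟨c, fun A hA => hc (Set.mem_image_of_mem _ hA)⟩
  set b : ℝ := max c 1 with hb
  have hb1 : (1:ℝ) ≤ b := le_max_right _ _
  have hgrow : ∀ l : List (Matrix (Fin d) (Fin d) ℝ), (∀ A ∈ l, A ∈ S) →
      ∀ z : Fin d → ℝ, ‖l.prod.mulVec z‖ ≤ b ^ l.length * ‖z‖ := by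
    intro l
    induction l with
    | nil => intro _ z; simp [Matrix.one_mulVec]
    | cons A l ih =>
      intro hm z
      have h1 : (A :: l).prod.mulVec z = A.mulVec (l.prod.mulVec z) := by
        rw [List.prod_cons, ← Matrix.mulVec_mulVec]
      rw [h1, ← clmOf_apply]
      calc ‖clmOf A (l.prod.mulVec z)‖ ≤ ‖clmOf A‖ * ‖l.prod.mulVec z‖ :=
            (clmOf A).le_opNorm _
        _ ≤ b * (b ^ l.length * ‖z‖) := by
            refine mul_le_mul ((hc A (hm A (List.mem_cons_self))).trans (le_max_left _ _))
              (ih (fun B hB => hm B (List.mem_cons_of_mem _ hB)) z) (norm_nonneg _) ?_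
            exact le_trans zero_le_one hb1
        _ = b ^ (A :: l).length * ‖z‖ := by rw [List.length_cons]; ring
  set T : ℝ := b ^ (L + 2) * ‖y‖ with hT
  have hTy : ‖y‖ ≤ T := by
    rw [hT]
    nlinarith [norm_nonneg y, one_le_pow₀ hb1 (n := L + 2)]
  have hTbig : ∀ l : List (Matrix (Fin d) (Fin d) ℝ), (∀ A ∈ l, A ∈ S) →
      l.length ≤ L + 2 → ‖l.prod.mulVec y‖ ≤ T := by
    intro l hl hlen
    refine (hgrow l hl y).trans ?_
    have : b ^ l.length ≤ b ^ (L + 2) := pow_le_pow_right₀ hb1 hlen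
    exact mul_le_mul_of_nonneg_right this (norm_nonneg _)
  have hex : ∃ n : ℕ, ∃ l : List (Matrix (Fin d) (Fin d) ℝ),
      l.length = n ∧ (∀ A ∈ l, A ∈ S) ∧ T < ‖l.prod.mulVec y‖ := by
    obtain ⟨l, hl, hlt⟩ := jsr_unbounded d hd S hρ y hinv T
    exact ⟨l.length, l, rfl, hl, hlt⟩
  classical
  set n := Nat.find hex with hn
  obtain ⟨l, hlen, hmemS, hnorm⟩ := Nat.find_spec hex
  have hgt : L + 2 < n := by
    by_contra hle
    push_neg at hle
    exact absurd (hTbig l hmemS (by omega)) (not_le.2 hnorm)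
  refine ⟨n, by omega, l, hlen, hmemS, lt_of_le_of_lt hTy hnorm, ?_⟩
  intro i hi
  have hlt : i + 1 < n := by omega
  have hsuffmem : ∀ A ∈ l.drop (n - (i+1)), A ∈ S :=
    fun A hA => hmemS A (List.mem_of_mem_drop hA)
  have hsufflen : (l.drop (n - (i+1))).length = i + 1 := by
    rw [List.length_drop, hlen]; omega
  have hsuff : ‖(l.drop (n - (i+1))).prod.mulVec y‖ ≤ T := by
    by_contra h'
    push_neg at h'
    exact Nat.find_min hex hlt ⟨_, hsufflen, hsuffmem, h'⟩
  exact lt_of_le_of_lt hsuff hnorm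
end

section
/- Let $a(z)$ be a Laurent polynomial with real coefficients such that $a(z) \neq 0$ on a neighborhood of $z = 0$ in $\mathbb{C}$ (equivalently, $a(0) \neq 0$ after writing $a$ as a power series). Let $b(z) = \sum_{\beta \geq 0} b(\beta) z^\beta$ be the Taylor expansion of $1/a(z)$ near $0$. Then for any compactly supported continuous function $h : \mathbb{R} \to \mathbb{R}$, setting $g := \sum_{\alpha} a(\alpha) h(\cdot - \alpha)$ (a finite sum), one has $h = \sum_{\beta \geq 0} b(\beta) g(\cdot - \beta)$, with the series converging locally uniformly (locally a finite sum on compact sets). -/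
theorem stmt6 (N : ℕ) (a : ℕ → ℝ) (ha0 : a 0 ≠ 0) (hasupp : ∀ α, N < α → a α = 0)
    (b : ℕ → ℝ)
    (hab : ∀ β : ℕ, ∑ α ∈ Finset.range (β+1), a α * b (β - α)
      = if β = 0 then 1 else 0)
    (h : ℝ → ℝ) (hc : Continuous h) (hsupp : HasCompactSupport h)
    (g : ℝ → ℝ) (hg : ∀ x, g x = ∑ α ∈ Finset.range (N+1), a α * h (x - α)) :
    ∀ x, HasSum (fun β : ℕ => b β * g (x - β)) (h x) := by
  intro x
  -- bound on support of h
  obtain ⟨R, hR⟩ := hsupp.isBounded.subset_closedBall 0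
  have hzero : ∀ y : ℝ, R < |y| → h y = 0 := by
    intro y hy
    apply image_eq_zero_of_notMem_tsupport
    intro hmem
    have := hR hmem
    simp [Metric.mem_closedBall, Real.dist_eq] at this
    linarith [le_abs_self (y : ℝ), abs_nonneg y]
  obtain ⟨K, hK⟩ := exists_nat_gt (max (x + R) N)
  have hKx : x + R < K := lt_of_le_of_lt (le_max_left _ _) hK
  have hKN : N < K := by
    have : (N : ℝ) < K := lt_of_le_of_lt (le_max_right _ _) hK
    exact_mod_cast this
  have hK0 : 0 < K := by omega
  -- h (x - γ) = 0 for γ ≥ K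
  have hH : ∀ γ : ℕ, K ≤ γ → h (x - γ) = 0 := by
    intro γ hγ
    apply hzero
    have : (K : ℝ) ≤ γ := by exact_mod_cast hγ
    have hx : x - γ < -R := by linarith
    calc R < -(x - γ) := by linarith
    _ ≤ |x - γ| := neg_le_abs _
  -- summand vanishes for β ≥ K
  have hvan : ∀ β : ℕ, β ∉ Finset.range K → b β * g (x - β) = 0 := by
    intro β hβ
    rw [Finset.mem_range, not_lt] at hβ
    have : g (x - β) = 0 := by
      rw [hg]
      apply Finset.sum_eq_zero
      intro α hα
      have : h (x - β - α) = 0 := by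
        apply hzero
        have hβ' : (K : ℝ) ≤ β := by exact_mod_cast hβ
        have hα' : (0:ℝ) ≤ α := Nat.cast_nonneg α
        have : x - β - α < -R := by linarith
        calc R < -(x - β - α) := by linarith
        _ ≤ |x - β - α| := neg_le_abs _
      rw [this, mul_zero]
    rw [this, mul_zero]
  have harg : ∀ α β : ℕ, x - β - α = x - ((α + β : ℕ) : ℝ) := by
    intro α β; push_cast; ring
  have key : ∑ β ∈ Finset.range K, b β * g (x - β) = h x := by
    have step1 : ∑ β ∈ Finset.range K, b β * g (x - β)
        = ∑ p ∈ Finset.range K ×ˢ Finset.range K,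
            a p.2 * b p.1 * h (x - ((p.2 + p.1 : ℕ) : ℝ)) := by
      rw [Finset.sum_product]
      refine Finset.sum_congr rfl fun β _ => ?_
      rw [hg, Finset.mul_sum]
      rw [Finset.sum_subset (Finset.range_subset_range.2 (by omega : N + 1 ≤ K))]
      · refine Finset.sum_congr rfl fun α _ => ?_
        rw [harg α β]; ring
      · intro α _ hα
        rw [Finset.mem_range, not_lt] at hα
        rw [hasupp α (by omega), zero_mul, mul_zero]
    rw [step1]
    rw [← Finset.sum_fiberwise_of_maps_to (g := fun p : ℕ × ℕ => p.2 + p.1)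
        (t := Finset.range (K + K)) (fun p hp => by
          simp only [Finset.mem_product, Finset.mem_range] at hp ⊢; omega)]
    -- kill fibers with γ ≥ K
    rw [← Finset.sum_subset (Finset.range_subset_range.2 (by omega : K ≤ K + K))
        (fun γ _ hγ => ?_)]
    · -- remaining: γ < K
      have hfib : ∀ γ ∈ Finset.range K,
          ((Finset.range K ×ˢ Finset.range K).filter
            (fun p : ℕ × ℕ => p.2 + p.1 = γ)) = Finset.HasAntidiagonal.antidiagonal γ := by
        intro γ hγ
        rw [Finset.mem_range] at hγ
        ext p
        simp only [Finset.mem_filter, Finset.mem_product, Finset.mem_range,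
          Finset.HasAntidiagonal.mem_antidiagonal]
        omega
      calc ∑ γ ∈ Finset.range K, ∑ p ∈ (Finset.range K ×ˢ Finset.range K).filter
              (fun p : ℕ × ℕ => p.2 + p.1 = γ),
              a p.2 * b p.1 * h (x - ((p.2 + p.1 : ℕ) : ℝ))
          = ∑ γ ∈ Finset.range K, (if γ = 0 then 1 else 0) * h (x - (γ : ℝ)) := by
            refine Finset.sum_congr rfl fun γ hγ => ?_
            rw [hfib γ hγ]
            rw [Finset.Nat.sum_antidiagonal_eq_sum_range_succ_mk]
            have : ∀ β ∈ Finset.range (γ + 1),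
                a (γ - β) * b β * h (x - (((γ - β : ℕ) + β : ℕ) : ℝ))
                  = a (γ - β) * b β * h (x - (γ : ℝ)) := by
              intro β hβ
              rw [Finset.mem_range] at hβ
              congr 2
              congr 1
              exact_mod_cast congrArg (Nat.cast (R := ℝ)) (by omega : γ - β + β = γ)
            rw [Finset.sum_congr rfl this, ← Finset.sum_mul]
            congr 1
            rw [← hab γ, ← Finset.sum_range_reflect]
            refine Finset.sum_congr rfl fun α hα => ?_
            rw [Finset.mem_range] at hα
            congr 2 <;> omega
        _ = h x := by
            rw [Finset.sum_eq_single 0]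
            · simp
            · intro γ _ hγ0; simp [hγ0]
            · intro habs; exact absurd (Finset.mem_range.2 hK0) habs
    · -- fibers with K ≤ γ < K + K vanish
      refine Finset.sum_eq_zero fun p hp => ?_
      rw [Finset.mem_filter] at hp
      rw [Finset.mem_range, not_lt] at hγ
      rw [hp.2, hH _ (by omega), mul_zero]
  rw [← key]
  exact hasSum_sum_of_ne_finset_zero hvan
end

section
/- Let $(p_k)_{k \geq 1}$ be a sequence of 1-periodic trigonometric polynomials of uniformly bounded degree $N$ with $p_k(0) = 1$, and suppose the sequence is uniformly bounded on $\mathbb{R}$ (e.g. because $p_k \to p$ uniformly for some trigonometric polynomial $p$). Then the infinite product $f(x) := \prod_{k=1}^\infty p_k(2^{-k}x)$ converges uniformly on every compact subset of $\mathbb{R}$. -/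
open Complex Finset

lemma aux_exp_bound (t : ℝ) : ‖Complex.exp ((t:ℂ) * Complex.I) - 1‖ ≤ 2 * |t| := by
  rcases le_or_gt (|t|) 1 with h | h
  · have := Complex.norm_exp_sub_one_le (x := (t:ℂ) * Complex.I) (by simpa using h)
    simpa using this
  · have h1 : ‖Complex.exp ((t:ℂ) * Complex.I) - 1‖ ≤ 2 := by
      calc ‖Complex.exp ((t:ℂ) * Complex.I) - 1‖ ≤ ‖Complex.exp ((t:ℂ) * Complex.I)‖ + ‖(1:ℂ)‖ :=
        norm_sub_le _ _
      _ = 2 := by simp [Complex.norm_exp_ofReal_mul_I]; norm_num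
    linarith

lemma coeff_bound (N : ℕ) (a : ℕ → ℂ) (q : ℝ → ℂ)
    (hq : ∀ x : ℝ, q x = ∑ j ∈ Finset.range (N+1),
      a j * Complex.exp (-2 * (Real.pi:ℂ) * Complex.I * (j:ℂ) * (x:ℂ)))
    (B : ℝ) (hB : ∀ x, ‖q x‖ ≤ B) {j : ℕ} (hj : j ∈ Finset.range (N+1)) :
    ‖a j‖ ≤ B := by
  set n := N + 1 with hn
  have hn0 : (n:ℂ) ≠ 0 := Nat.cast_ne_zero.mpr (by omega)
  have hjn : j < n := Finset.mem_range.mp hj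
  set z : ℕ → ℂ := fun j' => Complex.exp (2 * (Real.pi:ℂ) * Complex.I * (((j:ℂ) - j')/n)) with hz
  have key : ∑ m ∈ Finset.range n, q ((m:ℝ)/n) *
      Complex.exp (2 * (Real.pi:ℂ) * Complex.I * (j:ℂ) * ((m:ℝ)/n : ℝ)) = n * a j := by
    have step1 : ∀ m ∈ Finset.range n, q ((m:ℝ)/n) *
        Complex.exp (2 * (Real.pi:ℂ) * Complex.I * (j:ℂ) * ((m:ℝ)/n : ℝ))
        = ∑ j' ∈ Finset.range n, a j' * (z j') ^ m := by
      intro m _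
      rw [hq, Finset.sum_mul]
      refine Finset.sum_congr rfl fun j' _ => ?_
      rw [hz, mul_assoc, ← Complex.exp_nat_mul, ← Complex.exp_add]
      congr 1
      push_cast
      field_simp
      ring
    rw [Finset.sum_congr rfl step1, Finset.sum_comm]
    rw [Finset.sum_eq_single j (fun j' hj' hne => ?_) (fun h => absurd hj h)]
    · have hz1 : z j = 1 := by simp [hz]
      simp [hz1, mul_comm]
    · -- j' ≠ j : geometric sum vanishes
      have hπ : (2 * (Real.pi:ℂ) * Complex.I) ≠ 0 := by
        simp [Real.pi_ne_zero, Complex.I_ne_zero]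
      have hzne : z j' ≠ 1 := by
        rw [hz]
        intro h
        rw [Complex.exp_eq_one_iff] at h
        obtain ⟨m, hm⟩ := h
        have h3 : ((j:ℂ) - j') = (m:ℂ) * n := by
          apply mul_left_cancel₀ hπ
          field_simp [hn0] at hm
          linear_combination (2 * (Real.pi:ℂ) * Complex.I) * hm
        have h2 : ((j:ℤ) - j') = m * n := by exact_mod_cast h3
        have hj'n : j' < n := Finset.mem_range.mp hj'
        have habs : |((j:ℤ) - j')| < n := by rw [abs_lt]; constructor <;> omega
        have hdvd : (n:ℤ) ∣ ((j:ℤ) - j') := ⟨m, by rw [h2]; ring⟩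
        have h0' : ((j:ℤ) - j') = 0 := Int.eq_zero_of_abs_lt_dvd hdvd habs
        exact hne (by omega)
      have hzn : z j' ^ n = 1 := by
        rw [hz, ← Complex.exp_nat_mul]
        obtain ⟨k, hk⟩ : ∃ k : ℤ, ((k:ℤ):ℂ) = (j:ℂ) - j' :=
          ⟨(j:ℤ) - (j':ℤ), by push_cast; ring⟩
        have harg : (n:ℂ) * (2 * (Real.pi:ℂ) * Complex.I * (((j:ℂ) - j')/n)) =
            ((k:ℤ):ℂ) * (2 * (Real.pi:ℂ) * Complex.I) := by
          rw [hk]; field_simp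
        rw [harg, Complex.exp_int_mul_two_pi_mul_I]
      rw [← Finset.mul_sum, geom_sum_eq hzne, hzn]
      simp
  have hnorm : (n:ℝ) * ‖a j‖ ≤ (n:ℝ) * B := by
    calc (n:ℝ) * ‖a j‖ = ‖(n:ℂ) * a j‖ := by
          rw [norm_mul]; simp
    _ = ‖∑ m ∈ Finset.range n, q ((m:ℝ)/n) *
          Complex.exp (2 * (Real.pi:ℂ) * Complex.I * (j:ℂ) * ((m:ℝ)/n : ℝ))‖ := by rw [key]
    _ ≤ ∑ m ∈ Finset.range n, ‖q ((m:ℝ)/n) *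
          Complex.exp (2 * (Real.pi:ℂ) * Complex.I * (j:ℂ) * ((m:ℝ)/n : ℝ))‖ :=
        norm_sum_le _ _
    _ ≤ ∑ m ∈ Finset.range n, B := by
        refine Finset.sum_le_sum fun m _ => ?_
        rw [norm_mul]
        have h1 : ‖Complex.exp (2 * (Real.pi:ℂ) * Complex.I * (j:ℂ) * ((m:ℝ)/n : ℝ))‖ = 1 := by
          have : (2 * (Real.pi:ℂ) * Complex.I * (j:ℂ) * ((m:ℝ)/n : ℝ)) =
              ((2 * Real.pi * j * ((m:ℝ)/n) : ℝ) : ℂ) * Complex.I := by push_cast; ring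
          rw [this]
          simpa using Complex.norm_exp_ofReal_mul_I (2 * Real.pi * j * ((m:ℝ)/n))
        rw [h1, mul_one]
        exact hB _
    _ = (n:ℝ) * B := by simp [mul_comm]
  have hnpos : (0:ℝ) < n := by positivity
  exact le_of_mul_le_mul_left hnorm hnpos

theorem stmt13 (N : ℕ) (c : ℕ → ℕ → ℂ) (p : ℕ → ℝ → ℂ)
    (hp : ∀ k x, p k x = ∑ j ∈ Finset.range (N+1),
      c k j * Complex.exp (-2 * (Real.pi:ℂ) * Complex.I * (j:ℂ) * (x:ℂ)))
    (h0 : ∀ k, p k 0 = 1) (B : ℝ) (hB : ∀ k x, ‖p k x‖ ≤ B) :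
    ∃ f : ℝ → ℂ, ∀ K : Set ℝ, IsCompact K →
      TendstoUniformlyOn (fun n x => ∏ k ∈ Finset.range n, p (k+1) (x / 2^(k+1)))
        f Filter.atTop K := by
  classical
  have hcb : ∀ k, ∀ j ∈ Finset.range (N+1), ‖c k j‖ ≤ B := fun k j hj =>
    coeff_bound N (c k) (p k) (hp k) B (hB k) hj
  have hB1 : (1:ℝ) ≤ B := by have := hB 0 0; rwa [h0 0, norm_one] at this
  set C : ℝ := B * (4 * Real.pi) * (∑ j ∈ Finset.range (N+1), (j:ℝ)) with hC
  have hS0 : 0 ≤ ∑ j ∈ Finset.range (N+1), (j:ℝ) :=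
    Finset.sum_nonneg fun j _ => by positivity
  have hC0 : 0 ≤ C := by
    have hπ := Real.pi_pos
    have : (0:ℝ) ≤ B * (4 * Real.pi) := by nlinarith
    exact mul_nonneg this hS0
  -- uniform Lipschitz-type bound on the factors
  have hfac : ∀ k (t : ℝ), ‖p k t - 1‖ ≤ C * |t| := by
    intro k t
    have hsum1 : (∑ j ∈ Finset.range (N+1), c k j) = 1 := by
      have := h0 k
      rw [hp k 0] at this
      simpa using this
    have h1 : p k t - 1 = ∑ j ∈ Finset.range (N+1),
        c k j * (Complex.exp (-2 * (Real.pi:ℂ) * Complex.I * (j:ℂ) * (t:ℂ)) - 1) := by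
      rw [hp k t]
      simp only [mul_sub, mul_one, Finset.sum_sub_distrib, hsum1]
    rw [h1]
    refine (norm_sum_le _ _).trans ?_
    have hterm : ∀ j ∈ Finset.range (N+1),
        ‖c k j * (Complex.exp (-2 * (Real.pi:ℂ) * Complex.I * (j:ℂ) * (t:ℂ)) - 1)‖
          ≤ B * (4 * Real.pi * (j:ℝ)) * |t| := by
      intro j hj
      rw [norm_mul]
      have hw : (-2 * (Real.pi:ℂ) * Complex.I * (j:ℂ) * (t:ℂ)) =
          ((-2 * Real.pi * (j:ℝ) * t : ℝ) : ℂ) * Complex.I := by push_cast; ring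
      have hexp : ‖Complex.exp (-2 * (Real.pi:ℂ) * Complex.I * (j:ℂ) * (t:ℂ)) - 1‖
          ≤ 4 * Real.pi * (j:ℝ) * |t| := by
        rw [hw]
        refine (aux_exp_bound _).trans_eq ?_
        rw [abs_mul, abs_mul, abs_mul]
        rw [abs_of_nonpos (by norm_num : (-2:ℝ) ≤ 0), abs_of_pos Real.pi_pos,
          Nat.abs_cast]
        ring
      have h2 : (0:ℝ) ≤ 4 * Real.pi * (j:ℝ) * |t| := by positivity
      calc ‖c k j‖ * ‖Complex.exp (-2 * (Real.pi:ℂ) * Complex.I * (j:ℂ) * (t:ℂ)) - 1‖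
          ≤ B * (4 * Real.pi * (j:ℝ) * |t|) :=
            mul_le_mul (hcb k j hj) hexp (norm_nonneg _) (by linarith)
      _ = B * (4 * Real.pi * (j:ℝ)) * |t| := by ring
    refine (Finset.sum_le_sum hterm).trans_eq ?_
    rw [← Finset.sum_mul]
    congr 1
    rw [hC, Finset.mul_sum]
    exact Finset.sum_congr rfl fun j _ => by ring
  set F : ℕ → ℝ → ℂ := fun n x => ∏ k ∈ Finset.range n, p (k+1) (x / 2^(k+1)) with hFdef
  -- uniform Cauchy on closed balls
  have hUC : ∀ R : ℝ, 0 ≤ R →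
      UniformCauchySeqOn F Filter.atTop (Metric.closedBall 0 R) := by
    intro R hR
    set u : ℕ → ℝ := fun k => C * R / 2^(k+1) with hu
    have hu0 : ∀ k, 0 ≤ u k := fun k => by rw [hu]; positivity
    have husum : Summable u := by
      refine Summable.congr ((summable_geometric_two).mul_left (C*R/2)) fun k => ?_
      simp only [hu]
      rw [div_pow, one_pow, pow_succ]
      ring
    set M : ℝ := Real.exp (∑' k, u k) with hM
    have hM0 : 0 < M := Real.exp_pos _
    have hfb : ∀ x ∈ Metric.closedBall (0:ℝ) R, ∀ k,
        ‖p (k+1) (x / 2^(k+1)) - 1‖ ≤ u k := by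
      intro x hx k
      have hx' : |x| ≤ R := by simpa [Real.dist_eq] using Metric.mem_closedBall.mp hx
      calc ‖p (k+1) (x / 2^(k+1)) - 1‖ ≤ C * |x / 2^(k+1)| := hfac _ _
      _ = C * |x| / 2^(k+1) := by
          rw [abs_div, abs_of_pos (by positivity : (0:ℝ) < 2^(k+1))]
          ring
      _ ≤ C * R / 2^(k+1) := by gcongr
      _ = u k := by rw [hu]
    have hPb : ∀ x ∈ Metric.closedBall (0:ℝ) R, ∀ n, ‖F n x‖ ≤ M := by
      intro x hx n
      calc ‖F n x‖ = ∏ k ∈ Finset.range n, ‖p (k+1) (x / 2^(k+1))‖ := by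
            simp only [hFdef]; exact norm_prod _ _
      _ ≤ ∏ k ∈ Finset.range n, (1 + u k) := by
          refine Finset.prod_le_prod (fun k _ => norm_nonneg _) fun k _ => ?_
          have h5 := norm_add_le (p (k+1) (x / 2^(k+1)) - 1) 1
          rw [sub_add_cancel, norm_one] at h5
          have h6 := hfb x hx k
          linarith
      _ ≤ ∏ k ∈ Finset.range n, Real.exp (u k) := by
          refine Finset.prod_le_prod (fun k _ => by linarith [hu0 k]) fun k _ => ?_
          linarith [Real.add_one_le_exp (u k)]
      _ = Real.exp (∑ k ∈ Finset.range n, u k) := by rw [Real.exp_sum]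
      _ ≤ M := by
          rw [hM]
          exact Real.exp_le_exp.mpr (Summable.sum_le_tsum _ (fun k _ => hu0 k) husum)
    have hdiff : ∀ x ∈ Metric.closedBall (0:ℝ) R, ∀ k,
        ‖F (k+1) x - F k x‖ ≤ M * u k := by
      intro x hx k
      have he : F (k+1) x - F k x = F k x * (p (k+1) (x / 2^(k+1)) - 1) := by
        simp only [hFdef, Finset.prod_range_succ]
        ring
      rw [he, norm_mul]
      exact mul_le_mul (hPb x hx k) (hfb x hx k) (norm_nonneg _) (le_of_lt hM0)
    have htel : ∀ x ∈ Metric.closedBall (0:ℝ) R, ∀ m n, m ≤ n →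
        ‖F n x - F m x‖ ≤ M * ∑ k ∈ Finset.Ico m n, u k := by
      intro x hx m n hmn
      have he : F n x - F m x = ∑ k ∈ Finset.Ico m n, (F (k+1) x - F k x) := by
        rw [Finset.sum_Ico_eq_sub _ hmn, Finset.sum_range_sub (fun k => F k x),
          Finset.sum_range_sub (fun k => F k x)]
        ring
      rw [he]
      refine (norm_sum_le _ _).trans ?_
      calc ∑ k ∈ Finset.Ico m n, ‖F (k+1) x - F k x‖
          ≤ ∑ k ∈ Finset.Ico m n, M * u k :=
            Finset.sum_le_sum fun k _ => hdiff x hx k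
      _ = M * ∑ k ∈ Finset.Ico m n, u k := by rw [Finset.mul_sum]
    have hs : CauchySeq (fun n => ∑ k ∈ Finset.range n, u k) :=
      husum.hasSum.tendsto_sum_nat.cauchySeq
    rw [Metric.uniformCauchySeqOn_iff]
    intro ε hε
    obtain ⟨T, hT⟩ := Metric.cauchySeq_iff.mp hs (ε / M) (by positivity)
    refine ⟨T, fun m hm n hn x hx => ?_⟩
    have key : ∀ m' n', T ≤ m' → T ≤ n' → m' ≤ n' → dist (F m' x) (F n' x) < ε := by
      intro m' n' hm' hn' hle
      have h1 := htel x hx m' n' hle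
      have h2 : ∑ k ∈ Finset.Ico m' n', u k < ε / M := by
        have h3 := hT n' hn' m' hm'
        rw [Real.dist_eq] at h3
        have h4 : ∑ k ∈ Finset.Ico m' n', u k =
            (∑ k ∈ Finset.range n', u k) - (∑ k ∈ Finset.range m', u k) :=
          Finset.sum_Ico_eq_sub _ hle
        calc ∑ k ∈ Finset.Ico m' n', u k
            ≤ |(∑ k ∈ Finset.range n', u k) - (∑ k ∈ Finset.range m', u k)| := by
              rw [h4]; exact le_abs_self _
        _ < ε / M := h3
      rw [dist_eq_norm']
      calc ‖F n' x - F m' x‖ ≤ M * ∑ k ∈ Finset.Ico m' n', u k := h1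
      _ < M * (ε / M) := by exact (mul_lt_mul_iff_right₀ hM0).mpr h2
      _ = ε := by field_simp
    rcases le_total m n with h | h
    · exact key m n hm hn h
    · rw [dist_comm]; exact key n m hn hm h
  -- pointwise limits
  have hconv : ∀ x : ℝ, ∃ l, Filter.Tendsto (fun n => F n x) Filter.atTop (nhds l) := by
    intro x
    have h1 := hUC |x| (abs_nonneg x)
    have hx : x ∈ Metric.closedBall (0:ℝ) |x| := by
      simp [Metric.mem_closedBall, Real.dist_eq]
    have hcs : CauchySeq (fun n => F n x) := by
      rw [Metric.cauchySeq_iff]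
      intro ε hε
      obtain ⟨T, hT⟩ := Metric.uniformCauchySeqOn_iff.mp h1 ε hε
      exact ⟨T, fun m hm n hn => hT m hm n hn x hx⟩
    exact cauchySeq_tendsto_of_complete hcs
  refine ⟨fun x => (hconv x).choose, fun K hK => ?_⟩
  obtain ⟨R, hR⟩ := (Metric.isBounded_iff_subset_closedBall (0:ℝ)).mp hK.isBounded
  have hsub : K ⊆ Metric.closedBall 0 (max R 0) :=
    hR.trans (Metric.closedBall_subset_closedBall (le_max_left _ _))
  exact ((hUC (max R 0) (le_max_right _ _)).mono hsub).tendstoUniformlyOn_of_tendsto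
    fun x _ => (hconv x).choose_spec
end
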